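/- Let $A$ be a unital associative ring and let $k \ge 2$ be an integer. Then the two-sided ideal $T^{(k)}(A)$ generated by all left-normed commutators $[a_1, \dots, a_k]$ ($a_i \in A$) coincides with the right ideal of $A$ generated by these commutators; that is, every element of $T^{(k)}(A)$ is a finite sum of elements of the form $[a_1, \dots, a_k]\,u$ with $a_i, u \in A$. -/

import Mathlib

/-- The ring commutator `[a, b] = a * b - b * a`. -/
def brk {A : Type*} [NonUnitalNonAssocRing A] (a b : A) : A := a * b - b * a

/-- The left-normed commutator `[a 0, a 1, ..., a (k-1)]`. -/
def lnc {A : Type*} [NonUnitalNonAssocRing A] : ∀ {k : ℕ}, (Fin k → A) → A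
  | 0, _ => 0
  | 1, a => a 0
  | k + 2, a => brk (lnc (Fin.init a)) (a (Fin.last (k + 1)))

/-- `T A m` is the two-sided ideal of `A` generated by all left-normed commutators
of length `m` (for `m = 1` this is all of `A`). -/
def T (A : Type*) [NonUnitalNonAssocRing A] (m : ℕ) : TwoSidedIdeal A :=
  TwoSidedIdeal.span {x | ∃ a : Fin m → A, x = lnc a}

lemma lnc_snoc {A : Type*} [NonUnitalNonAssocRing A] {m : ℕ} (g : Fin (m + 1) → A) (x : A) :
    lnc (Fin.snoc g x) = brk (lnc g) x := by
  simp only [lnc, Fin.init_snoc, Fin.snoc_last]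

/-- Key identity: `b * [c, y] = [c, b*y] - [c, b] * y`. -/
lemma mul_brk {A : Type*} [Ring A] (c b y : A) :
    b * brk c y = brk c (b * y) - brk c b * y := by
  simp only [brk]
  noncomm_ring

lemma mul_lnc_mul_mem {A : Type*} [Ring A] {m : ℕ} (a : Fin (m + 2) → A) (b u : A) :
    b * (lnc a * u) ∈
      AddSubgroup.closure {z : A | ∃ (a : Fin (m + 2) → A) (u : A), z = lnc a * u} := by
  have h : lnc a = brk (lnc (Fin.init a)) (a (Fin.last (m + 1))) := rfl
  set c := lnc (Fin.init a)
  set y := a (Fin.last (m + 1))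
  have key : b * (lnc a * u)
      = lnc (Fin.snoc (Fin.init a) (b * y)) * u
        - lnc (Fin.snoc (Fin.init a) b) * (y * u) := by
    rw [h, lnc_snoc, lnc_snoc, ← mul_assoc, mul_brk c b y]
    show (brk c (b * y) - brk c b * y) * u = brk c (b * y) * u - brk c b * (y * u)
    noncomm_ring
  rw [key]
  exact sub_mem (AddSubgroup.subset_closure ⟨_, u, rfl⟩)
    (AddSubgroup.subset_closure ⟨_, y * u, rfl⟩)

theorem T_eq_rightIdeal {A : Type*} [Ring A] (k : ℕ) (hk : 2 ≤ k) (x : A) :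
    x ∈ T A k ↔
      x ∈ AddSubgroup.closure {z : A | ∃ (a : Fin k → A) (u : A), z = lnc a * u} := by
  obtain ⟨m, rfl⟩ : ∃ m, k = m + 2 := ⟨k - 2, by omega⟩
  set S : Set A := {z : A | ∃ (a : Fin (m + 2) → A) (u : A), z = lnc a * u} with hS
  constructor
  · intro hx
    have h_left : ∀ {b z : A}, z ∈ AddSubgroup.closure S →
        b * z ∈ AddSubgroup.closure S := by
      intro b z hz
      induction hz using AddSubgroup.closure_induction with
      | mem w hw =>
        obtain ⟨a, u, rfl⟩ := hw
        exact mul_lnc_mul_mem a b u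
      | zero => simpa using AddSubgroup.zero_mem _
      | add x y _ _ hx hy => rw [mul_add]; exact add_mem hx hy
      | neg x _ hx => rw [mul_neg]; exact neg_mem hx
    have h_right : ∀ {z b : A}, z ∈ AddSubgroup.closure S →
        z * b ∈ AddSubgroup.closure S := by
      intro z b hz
      induction hz using AddSubgroup.closure_induction with
      | mem w hw =>
        obtain ⟨a, u, rfl⟩ := hw
        exact AddSubgroup.subset_closure ⟨a, u * b, by rw [mul_assoc]⟩
      | zero => simpa using AddSubgroup.zero_mem _
      | add x y _ _ hx hy => rw [add_mul]; exact add_mem hx hy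
      | neg x _ hx => rw [neg_mul]; exact neg_mem hx
    let I : TwoSidedIdeal A := TwoSidedIdeal.mk' (AddSubgroup.closure S)
      (AddSubgroup.zero_mem _) (AddSubgroup.add_mem _) (AddSubgroup.neg_mem _)
      h_left h_right
    have : x ∈ I := TwoSidedIdeal.mem_span_iff.mp hx I (by
      rintro w ⟨a, rfl⟩
      show lnc a ∈ I
      rw [TwoSidedIdeal.mem_mk']
      exact AddSubgroup.subset_closure ⟨a, 1, by rw [mul_one]⟩)
    rwa [TwoSidedIdeal.mem_mk'] at this
  · intro hx
    induction hx using AddSubgroup.closure_induction with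
    | mem w hw =>
      obtain ⟨a, u, rfl⟩ := hw
      exact TwoSidedIdeal.mul_mem_right _ _ _ (TwoSidedIdeal.subset_span ⟨a, rfl⟩)
    | zero => simpa using TwoSidedIdeal.zero_mem _
    | add x y _ _ hx hy => exact TwoSidedIdeal.add_mem _ hx hy
    | neg x _ hx => exact TwoSidedIdeal.neg_mem _ hx
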